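/- In a k-connected chordal graph G with at least k+2 vertices, every edge incident to a simplicial vertex is contractible. -/

import Mathlib

open SimpleGraph

/-- `S` is a vertex separator of `G`: deleting `S` leaves a disconnected graph
(two vertices with no path between them). -/
def IsSeparator {V : Type*} (G : SimpleGraph V) (S : Set V) : Prop :=
  ¬ (G.induce (Sᶜ : Set V)).Preconnected

/-- `S` is a minimal vertex separator of `G`. -/
def MinimalSeparator {V : Type*} (G : SimpleGraph V) (S : Set V) : Prop :=
  IsSeparator G S ∧ ∀ S' ⊂ S, ¬ IsSeparator G S'

/-- `G` is `k`-connected: more than `k` vertices and every separator has size at least `k`. -/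
def KConnected {V : Type*} [Fintype V] (k : ℕ) (G : SimpleGraph V) : Prop :=
  k < Fintype.card V ∧ ∀ S : Set V, IsSeparator G S → k ≤ S.ncard

/-- Vertex connectivity: least size of a set whose removal disconnects the graph
or leaves at most one vertex. -/
noncomputable def vConn {V : Type*} [Fintype V] (G : SimpleGraph V) : ℕ :=
  sInf {n | ∃ S : Set V, S.ncard = n ∧ (IsSeparator G S ∨ (Sᶜ : Set V).ncard ≤ 1)}

/-- Contraction of the edge `{u,v}`: the vertex `v` is deleted and `u` plays the
role of the merged vertex `z`, adjacent to all former neighbors of `u` or `v`. -/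
def contract {V : Type*} (G : SimpleGraph V) (u v : V) :
    SimpleGraph {x : V // x ≠ v} where
  Adj a b := a ≠ b ∧ (G.Adj a b ∨ (a.1 = u ∧ G.Adj v b) ∨ (b.1 = u ∧ G.Adj v a))
  symm := by
    refine ⟨?_⟩
    rintro a b ⟨h1, h2 | ⟨h3, h4⟩ | ⟨h3, h4⟩⟩
    · exact ⟨h1.symm, Or.inl h2.symm⟩
    · exact ⟨h1.symm, Or.inr (Or.inr ⟨h3, h4⟩)⟩
    · exact ⟨h1.symm, Or.inr (Or.inl ⟨h3, h4⟩)⟩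
  loopless := ⟨by rintro a ⟨h, -⟩; exact h rfl⟩

/-- A tree decomposition of `G` with tree `T` and bags `l`. -/
structure TreeDecomp {V ι : Type*} (G : SimpleGraph V) (T : SimpleGraph ι)
    (l : ι → Set V) : Prop where
  conn : T.Connected
  acyclic : T.IsAcyclic
  coversV : ∀ v : V, ∃ x : ι, v ∈ l x
  coversE : ∀ ⦃u v : V⦄, G.Adj u v → ∃ x : ι, u ∈ l x ∧ v ∈ l x
  subtree : ∀ v : V, (T.induce {x : ι | v ∈ l x}).Connected

/-- A clique tree of `G`: a tree decomposition whose bags are exactly the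
maximal cliques of `G`. -/
def IsCliqueTree {V ι : Type*} (G : SimpleGraph V) (T : SimpleGraph ι)
    (l : ι → Set V) : Prop :=
  TreeDecomp G T l ∧ (∀ x : ι, Maximal G.IsClique (l x)) ∧
    ∀ C : Set V, Maximal G.IsClique C → ∃ x : ι, l x = C

/-- `G` is chordal: every cycle of length at least 4 has a chord. -/
def IsChordal {V : Type*} (G : SimpleGraph V) : Prop :=
  ∀ (v : V) (w : G.Walk v v), w.IsCycle → 4 ≤ w.length →
    ∃ a b : V, G.Adj a b ∧ a ∈ w.support ∧ b ∈ w.support ∧ s(a, b) ∉ w.edges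

/-- A split partition of `G`: `I` is a stable set, `K` a clique, partitioning the vertices. -/
def IsSplitPartition {V : Type*} (G : SimpleGraph V) (I K : Set V) : Prop :=
  I ∪ K = Set.univ ∧ Disjoint I K ∧ (∀ a ∈ I, ∀ b ∈ I, ¬ G.Adj a b) ∧ G.IsClique K

lemma simplicial_remove {V : Type*} (H : SimpleGraph V) (v : V)
    (hs : H.IsClique (H.neighborSet v)) :
    ∀ (n : ℕ) (a b : V) (ha : a ≠ v) (hb : b ≠ v) (w : H.Walk a b), w.length ≤ n →
      (H.induce {x | x ≠ v}).Reachable ⟨a, ha⟩ ⟨b, hb⟩ := by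
  intro n
  induction n with
  | zero =>
    intro a b ha hb w hw
    cases w with
    | nil => exact Reachable.refl _
    | cons h p => simp [SimpleGraph.Walk.length_cons] at hw
  | succ n ih =>
    intro a b ha hb w hw
    cases w with
    | nil => exact Reachable.refl _
    | @cons _ c _ h p =>
      by_cases hc : c = v
      · subst hc
        cases p with
        | nil => exact absurd rfl hb
        | @cons _ d _ h2 q =>
          have hd : d ≠ c := fun e => H.loopless.irrefl c (e ▸ h2)
          have hlen : q.length ≤ n := by
            simp [SimpleGraph.Walk.length_cons] at hw; omega
          by_cases had : a = d
          · subst had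
            exact ih a b ha hb q hlen
          · have hadj : H.Adj a d := hs (H.mem_neighborSet c a |>.mpr h.symm)
              (H.mem_neighborSet c d |>.mpr h2) had
            have hadj' : (H.induce {x | x ≠ c}).Adj ⟨a, ha⟩ ⟨d, hd⟩ := hadj
            exact hadj'.reachable.trans (ih d b hd hb q hlen)
      · have hlen : p.length ≤ n := by
          simp [SimpleGraph.Walk.length_cons] at hw; omega
        have hadj' : (H.induce {x | x ≠ v}).Adj ⟨a, ha⟩ ⟨c, hc⟩ := h
        exact hadj'.reachable.trans (ih c b hc hb p hlen)

/-- In a `k`-connected chordal graph with at least `k+2` vertices,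
every edge incident to a simplicial vertex is contractible. -/
theorem stmt_8 {V : Type*} [Fintype V] [DecidableEq V] (G : SimpleGraph V) (k : ℕ)
    (hcard : k + 2 ≤ Fintype.card V) (hconn : KConnected k G) (hch : IsChordal G)
    (u v : V) (hsimp : G.IsClique (G.neighborSet v)) (he : G.Adj u v) :
    KConnected k (contract G u v) := by
  obtain ⟨hk, hsep⟩ := hconn
  constructor
  · have h1 : Fintype.card {x : V // x ≠ v} = Fintype.card V - 1 := by
      simp [ne_eq, Fintype.card_subtype_compl, Fintype.card_subtype_eq]
    omega
  · intro S hS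
    by_contra hlt
    push_neg at hlt
    set T : Set V := Subtype.val '' S with hTdef
    have hT : T.ncard = S.ncard := Set.ncard_image_of_injective _ Subtype.val_injective
    have hTsep : ¬ IsSeparator G T := fun h => absurd (hsep T h) (by omega)
    have hpre : (G.induce (Tᶜ : Set V)).Preconnected := not_not.mp hTsep
    apply hS
    intro a b
    have haT : (a.1.1 : V) ∈ (Tᶜ : Set V) := by
      rintro ⟨s, hsS, hval⟩
      exact a.2 (show a.1 ∈ S from (Subtype.ext hval : s = a.1) ▸ hsS)
    have hbT : (b.1.1 : V) ∈ (Tᶜ : Set V) := by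
      rintro ⟨s, hsS, hval⟩
      exact b.2 (show b.1 ∈ S from (Subtype.ext hval : s = b.1) ▸ hsS)
    have hvT : v ∈ (Tᶜ : Set V) := by
      rintro ⟨s, hsS, hval⟩
      exact s.2 hval
    set H : SimpleGraph (Tᶜ : Set V) := G.induce (Tᶜ : Set V) with hHdef
    have hsH : H.IsClique (H.neighborSet ⟨v, hvT⟩) := by
      intro x hx y hy hxy
      have hxv : G.Adj v x.1 := hx
      have hyv : G.Adj v y.1 := hy
      exact hsimp hxv hyv (fun e => hxy (Subtype.ext e))
    obtain ⟨w⟩ := hpre ⟨a.1.1, haT⟩ ⟨b.1.1, hbT⟩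
    have ha' : (⟨a.1.1, haT⟩ : (Tᶜ : Set V)) ≠ ⟨v, hvT⟩ := fun e => a.1.2 (congrArg Subtype.val e)
    have hb' : (⟨b.1.1, hbT⟩ : (Tᶜ : Set V)) ≠ ⟨v, hvT⟩ := fun e => b.1.2 (congrArg Subtype.val e)
    have r := simplicial_remove H ⟨v, hvT⟩ hsH w.length _ _ ha' hb' w le_rfl
    -- map into (contract G u v).induce Sᶜ
    have hmap : ∀ x : {y : (Tᶜ : Set V) // y ≠ ⟨v, hvT⟩}, (⟨x.1.1, fun e => x.2 (Subtype.ext e)⟩ : {z : V // z ≠ v}) ∈ (Sᶜ : Set _) := by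
      intro x hxS
      exact x.1.2 ⟨_, hxS, rfl⟩
    let f : (H.induce {y : (Tᶜ : Set V) | y ≠ ⟨v, hvT⟩}) →g ((contract G u v).induce (Sᶜ : Set _)) :=
      { toFun := fun x => ⟨⟨x.1.1, fun e => x.2 (Subtype.ext e)⟩, hmap x⟩
        map_rel' := by
          intro x y hxy
          have hadj : G.Adj x.1.1 y.1.1 := hxy
          refine ⟨?_, Or.inl hadj⟩
          intro e
          apply hadj.ne
          exact congrArg (fun t : {z : V // z ≠ v} => t.1) e }
    have r2 := r.map f
    have ea : f ⟨⟨a.1.1, haT⟩, ha'⟩ = a := by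
      apply Subtype.ext; apply Subtype.ext; rfl
    have eb : f ⟨⟨b.1.1, hbT⟩, hb'⟩ = b := by
      apply Subtype.ext; apply Subtype.ext; rfl
    rw [ea, eb] at r2
    exact r2
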